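/- The Baxter equivalence relation is compatible with the destandardization process: for words u, v in A*, u ≡_B v if and only if std(u) ≡_B std(v) and eval(u) = eval(v). -/

import Mathlib

open scoped Classical

/-- Baxter adjacency relations on words over the alphabet of natural numbers. -/
def BaxterAdj (w w' : List ℕ) : Prop :=
  (∃ (a b c d : ℕ) (u v : List ℕ), a ≤ b ∧ b < c ∧ c ≤ d ∧
      w = c :: (u ++ a :: d :: (v ++ [b])) ∧ w' = c :: (u ++ d :: a :: (v ++ [b]))) ∨
  (∃ (a b c d : ℕ) (u v : List ℕ), a < b ∧ b ≤ c ∧ c < d ∧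
      w = b :: (u ++ d :: a :: (v ++ [c])) ∧ w' = b :: (u ++ a :: d :: (v ++ [c])))

/-- One rewriting step: an adjacency applied inside a word (congruence context). -/
def BaxterStep (w w' : List ℕ) : Prop :=
  ∃ (p s u v : List ℕ), BaxterAdj u v ∧ w = p ++ u ++ s ∧ w' = p ++ v ++ s

/-- The Baxter congruence: the equivalence generated by the Baxter steps. -/
def BaxterEquiv : List ℕ → List ℕ → Prop := Relation.EqvGen BaxterStep

/-- Sylvester adjacency: a c u b ≡ c a u b when a ≤ b < c. -/
def SylvAdj (w w' : List ℕ) : Prop :=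
  ∃ (a b c : ℕ) (u : List ℕ), a ≤ b ∧ b < c ∧
    w = a :: c :: (u ++ [b]) ∧ w' = c :: a :: (u ++ [b])

def SylvStep (w w' : List ℕ) : Prop :=
  ∃ (p s u v : List ℕ), SylvAdj u v ∧ w = p ++ u ++ s ∧ w' = p ++ v ++ s

def SylvEquiv : List ℕ → List ℕ → Prop := Relation.EqvGen SylvStep

/-- #-sylvester adjacency: b u a c ≡ b u c a when a < b ≤ c. -/
def SylvHAdj (w w' : List ℕ) : Prop :=
  ∃ (a b c : ℕ) (u : List ℕ), a < b ∧ b ≤ c ∧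
    w = b :: (u ++ [a, c]) ∧ w' = b :: (u ++ [c, a])

def SylvHStep (w w' : List ℕ) : Prop :=
  ∃ (p s u v : List ℕ), SylvHAdj u v ∧ w = p ++ u ++ s ∧ w' = p ++ v ++ s

def SylvHEquiv : List ℕ → List ℕ → Prop := Relation.EqvGen SylvHStep

/-- The standardized word of `u`: position `i` receives the rank of the letter `u i`
(ties broken from left to right), ranks starting at `1`. -/
def std (u : List ℕ) : List ℕ :=
  (List.range u.length).map fun i =>
    ((List.range u.length).filter fun j =>
      decide (u.getD j 0 < u.getD i 0 ∨ (u.getD j 0 = u.getD i 0 ∧ j < i))).length + 1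

/-- The maximal letter of a word. -/
def wordMax (u : List ℕ) : ℕ := u.foldr max 0

/-- The Schützenberger transformation: reverse and complement each letter w.r.t. max + 1. -/
def schutz (u : List ℕ) : List ℕ := u.reverse.map fun x => wordMax u + 1 - x

/-- Labeled binary trees. -/
inductive BT where
  | leaf : BT
  | node : BT → ℕ → BT → BT
deriving DecidableEq

/-- Leaf insertion into a left binary search tree. -/
def leafInsL : BT → ℕ → BT
  | .leaf, a => .node .leaf a .leaf
  | .node l b r, a => if a < b then .node (leafInsL l a) b r else .node l b (leafInsL r a)

/-- Leaf insertion into a right binary search tree. -/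
def leafInsR : BT → ℕ → BT
  | .leaf, a => .node .leaf a .leaf
  | .node l b r, a => if a ≤ b then .node (leafInsR l a) b r else .node l b (leafInsR r a)

/-- The lower restricted tree `T_{≤ a}` of a right binary search tree. -/
def splitLE : BT → ℕ → BT
  | .leaf, _ => .leaf
  | .node l b r, a => if b ≤ a then .node l b (splitLE r a) else splitLE l a

/-- The higher restricted tree `T_{> a}` of a right binary search tree. -/
def splitGT : BT → ℕ → BT
  | .leaf, _ => .leaf
  | .node l b r, a => if b ≤ a then splitGT r a else .node (splitGT l a) b r

/-- Root insertion into a right binary search tree. -/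
def rootIns (t : BT) (a : ℕ) : BT := .node (splitLE t a) a (splitGT t a)

/-- The left tree of the P-symbol: leaf insertions from left to right. -/
def insL (u : List ℕ) : BT := u.foldl leafInsL .leaf

/-- The right tree of the P-symbol: root insertions from left to right. -/
def insR (u : List ℕ) : BT := u.foldl rootIns .leaf

/-- The P-symbol of a word. -/
def Psymb (u : List ℕ) : BT × BT := (insL u, insR u)

/-- Unlabeled binary trees. -/
inductive UBT where
  | leaf : UBT
  | node : UBT → UBT → UBT
deriving DecidableEq

/-- The shape of a labeled binary tree. -/
def shape : BT → UBT
  | .leaf => .leaf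
  | .node l _ r => .node (shape l) (shape r)

/-- The shape of the P-symbol of a word. -/
def Pshape (u : List ℕ) : UBT × UBT := (shape (insL u), shape (insR u))

/-- Number of internal nodes. -/
def sizeU : UBT → ℕ
  | .leaf => 0
  | .node l r => sizeU l + sizeU r + 1

/-- Orientations of the leaves, from left to right: `true` means right-oriented
(the leaf is the right child of its parent); the parameter is the orientation
assigned if the tree is reduced to a leaf. -/
def loU : UBT → Bool → List Bool
  | .leaf, b => [b]
  | .node l r, _ => loU l false ++ loU r true

/-- Leaf orientations of a labeled binary tree. -/
def loB : BT → Bool → List Bool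
  | .leaf, b => [b]
  | .node l _ r, _ => loB l false ++ loB r true

/-- The canopy: orientations of the leaves except the first and the last one. -/
def canU (t : UBT) : List Bool := ((loU t false).drop 1).dropLast

/-- A pair of twin binary trees: same number of nodes and complementary canopies. -/
def IsTwin (J : UBT × UBT) : Prop :=
  sizeU J.1 = sizeU J.2 ∧ (canU J.1).length = (canU J.2).length ∧
    ∀ i < (canU J.1).length, (canU J.1).getD i false ≠ (canU J.2).getD i false

/-- `σ` is (the word of) a permutation of `{1, …, n}`. -/
def IsPerm (n : ℕ) (σ : List ℕ) : Prop := σ.Perm (List.range' 1 n)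

/-- Covering-type step of the right permutohedron (weak) order: exchange of two
adjacent letters `a < b`. -/
def PermutoStep (σ ν : List ℕ) : Prop :=
  ∃ (p s : List ℕ) (a b : ℕ), a < b ∧ σ = p ++ a :: b :: s ∧ ν = p ++ b :: a :: s

/-- The right permutohedron (weak) order. -/
def PermutoLe : List ℕ → List ℕ → Prop := Relation.ReflTransGen PermutoStep

/-- Baxter permutations: avoiding the generalized patterns 2-41-3 and 3-14-2. -/
def IsBaxterPerm (σ : List ℕ) : Prop :=
  ∀ i j k, i < j → j + 1 < k → k < σ.length →
    ¬(σ.getD (j+1) 0 < σ.getD i 0 ∧ σ.getD i 0 < σ.getD k 0 ∧ σ.getD k 0 < σ.getD j 0) ∧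
    ¬(σ.getD j 0 < σ.getD k 0 ∧ σ.getD k 0 < σ.getD i 0 ∧ σ.getD i 0 < σ.getD (j+1) 0)


noncomputable def rnkF (u : List ℕ) (i : ℕ) : Finset ℕ :=
  (Finset.range u.length).filter fun j =>
    (u.getD j 0 < u.getD i 0 ∨ (u.getD j 0 = u.getD i 0 ∧ j < i))

lemma std_length (u : List ℕ) : (std u).length = u.length := by simp [std]

lemma std_getD (u : List ℕ) (i : ℕ) (h : i < u.length) :
    (std u).getD i 0 = (rnkF u i).card + 1 := by
  rw [std, List.getD_eq_getElem _ _ (by simpa [std] using h), List.getElem_map,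
    List.getElem_range]
  have : (rnkF u i).card = ((List.range u.length).filter fun j =>
      decide (u.getD j 0 < u.getD i 0 ∨ (u.getD j 0 = u.getD i 0 ∧ j < i))).length := by
    unfold rnkF
    rw [Finset.card, Finset.filter_val, Finset.range_val, Multiset.range,
      Multiset.filter_coe]
    simp [List.countP_eq_length_filter]
  omega

lemma mem_rnkF (u : List ℕ) (i k : ℕ) :
    k ∈ rnkF u i ↔ k < u.length ∧
      (u.getD k 0 < u.getD i 0 ∨ (u.getD k 0 = u.getD i 0 ∧ k < i)) := by
  simp [rnkF]

lemma rnk_lt_of_le (u : List ℕ) {i j : ℕ} (hij : i < j) (hj : j < u.length)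
    (hle : u.getD i 0 ≤ u.getD j 0) : (rnkF u i).card < (rnkF u j).card := by
  apply Finset.card_lt_card
  constructor
  · intro k hk
    rw [mem_rnkF] at hk ⊢
    refine ⟨hk.1, ?_⟩
    rcases hk.2 with h | ⟨h1, h2⟩
    · exact Or.inl (lt_of_lt_of_le h hle)
    · rcases lt_or_eq_of_le hle with h | h
      · exact Or.inl (h1 ▸ h)
      · exact Or.inr ⟨h1.trans h, h2.trans hij⟩
  · intro hsub
    have hi : i ∈ rnkF u j := by
      rw [mem_rnkF]
      refine ⟨lt_trans hij hj, ?_⟩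
      rcases lt_or_eq_of_le hle with h | h
      · exact Or.inl h
      · exact Or.inr ⟨h, hij⟩
    have := hsub hi
    rw [mem_rnkF] at this
    omega

lemma rnk_lt_of_lt (u : List ℕ) {i j : ℕ} (hij : i < j) (hj : j < u.length)
    (hlt : u.getD j 0 < u.getD i 0) : (rnkF u j).card < (rnkF u i).card := by
  apply Finset.card_lt_card
  constructor
  · intro k hk
    rw [mem_rnkF] at hk ⊢
    refine ⟨hk.1, ?_⟩
    rcases hk.2 with h | ⟨h1, h2⟩
    · exact Or.inl (h.trans hlt)
    · exact Or.inl (h1 ▸ hlt)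
  · intro hsub
    have hjmem : j ∈ rnkF u i := by
      rw [mem_rnkF]; exact ⟨hj, Or.inl hlt⟩
    have := hsub hjmem
    rw [mem_rnkF] at this
    omega

lemma std_lt_iff (u : List ℕ) {i j : ℕ} (hij : i < j) (hj : j < u.length) :
    (std u).getD i 0 < (std u).getD j 0 ↔ u.getD i 0 ≤ u.getD j 0 := by
  rw [std_getD u i (hij.trans hj), std_getD u j hj]
  constructor
  · intro h
    by_contra hc
    push_neg at hc
    have := rnk_lt_of_lt u hij hj hc
    omega
  · intro h
    have := rnk_lt_of_le u hij hj h
    omega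

lemma std_gt_iff (u : List ℕ) {i j : ℕ} (hij : i < j) (hj : j < u.length) :
    (std u).getD j 0 < (std u).getD i 0 ↔ u.getD j 0 < u.getD i 0 := by
  rw [std_getD u i (hij.trans hj), std_getD u j hj]
  constructor
  · intro h
    by_contra hc
    push_neg at hc
    have := rnk_lt_of_le u hij hj hc
    omega
  · intro h
    have := rnk_lt_of_lt u hij hj h
    omega
lemma getD_drop' (u : List ℕ) (m i : ℕ) : (u.drop m).getD i 0 = u.getD (m+i) 0 := by
  simp [List.getD_eq_getElem?_getD, List.getElem?_drop]
lemma getD_take' (u : List ℕ) (p i : ℕ) (h : i < p) : (u.take p).getD i 0 = u.getD i 0 := by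
  simp [List.getD_eq_getElem?_getD, List.getElem?_take_of_lt h]
lemma drop_eq_getD_cons (L : List ℕ) (k : ℕ) (h : k < L.length) :
    L.drop k = L.getD k 0 :: L.drop (k+1) := by
  rw [List.getD_eq_getElem _ _ h]; exact List.drop_eq_getElem_cons h
lemma take_split (L : List ℕ) (i j : ℕ) (hij : i < j) (hj : j ≤ L.length) :
    L.take j = L.take i ++ L.getD i 0 :: (L.drop (i+1)).take (j - (i+1)) := by
  conv_lhs => rw [← List.take_append_drop i (L.take j)]
  rw [List.take_take, min_eq_left hij.le, List.drop_take]
  congr 1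
  rw [drop_eq_getD_cons L i (lt_of_lt_of_le hij hj), List.take_cons (by omega)]
  have : j - i - 1 = j - (i+1) := by omega
  rw [this]
lemma drop_split (L : List ℕ) (m t : ℕ) :
    L.drop m = (L.drop m).take t ++ L.drop (m+t) := by
  conv_lhs => rw [← List.take_append_drop t (L.drop m)]
  rw [List.drop_drop, Nat.add_comm]

def swp (p k : ℕ) : ℕ := if k = p then p+1 else if k = p+1 then p else k

lemma swp_invol (p k : ℕ) : swp p (swp p k) = k := by unfold swp; split_ifs <;> omega

lemma swp_inj (p : ℕ) : Function.Injective (swp p) :=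
  Function.Involutive.injective (swp_invol p)

lemma swp_lt (p n k : ℕ) (h : p+1 < n) : swp p k < n ↔ k < n := by
  unfold swp; split_ifs <;> omega

lemma length_swapform (X : List ℕ) (a b : ℕ) (p : ℕ) (hp : p+1 < X.length) :
    (X.take p ++ a :: b :: X.drop (p+2)).length = X.length := by
  simp; omega

lemma getD_swapform (X : List ℕ) (a b : ℕ) (p : ℕ) (hp : p+1 < X.length) (i : ℕ) :
    (X.take p ++ a :: b :: X.drop (p+2)).getD i 0 =
      if i < p then X.getD i 0 else if i = p then a else if i = p+1 then b
        else X.getD i 0 := by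
  have hlt : (X.take p).length = p := by simp; omega
  split_ifs with h1 h2 h3
  · rw [List.getD_append _ _ _ _ (by omega), getD_take' _ _ _ h1]
  · subst h2
    rw [List.getD_append_right _ _ _ _ (by omega), hlt]
    simp
  · subst h3
    rw [List.getD_append_right _ _ _ _ (by omega), hlt]
    have : p + 1 - p = 1 := by omega
    rw [this]
    simp
  · by_cases h4 : i < X.length
    · rw [List.getD_append_right _ _ _ _ (by omega), hlt]
      have h5 : i - p = (i - p - 2) + 2 := by omega
      rw [h5]
      show (X.drop (p+2)).getD (i - p - 2) 0 = X.getD i 0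
      rw [getD_drop']
      congr 1
      omega
    · rw [List.getD_eq_default _ _ (by simp; omega), List.getD_eq_default _ _ (by omega)]

lemma swap_getD (u : List ℕ) (p : ℕ) (hp : p+1 < u.length) (k : ℕ) :
    (u.take p ++ u.getD (p+1) 0 :: u.getD p 0 :: u.drop (p+2)).getD k 0
      = u.getD (swp p k) 0 := by
  rw [getD_swapform _ _ _ _ hp]
  unfold swp
  split_ifs <;> first | rfl | omega | (congr 1; omega)

lemma ext_getD (L M : List ℕ) (h : L.length = M.length)
    (hg : ∀ i < L.length, L.getD i 0 = M.getD i 0) : L = M := by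
  apply List.ext_getElem h
  intro i h1 h2
  rw [← List.getD_eq_getElem L 0 h1, ← List.getD_eq_getElem M 0 h2]
  exact hg i h1

lemma swp_lt_swp (p k i : ℕ) (h1 : ¬(k = p ∧ i = p+1)) (h2 : ¬(k = p+1 ∧ i = p)) :
    swp p k < swp p i ↔ k < i := by
  unfold swp; split_ifs <;> omega

lemma rnkF_swap (u : List ℕ) (p : ℕ) (hp : p+1 < u.length)
    (hne : u.getD p 0 ≠ u.getD (p+1) 0) (i : ℕ) :
    rnkF (u.take p ++ u.getD (p+1) 0 :: u.getD p 0 :: u.drop (p+2)) i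
      = (rnkF u (swp p i)).image (swp p) := by
  have hlen := length_swapform u (u.getD (p+1) 0) (u.getD p 0) p hp
  ext k
  rw [Finset.mem_image]
  constructor
  · intro hk
    refine ⟨swp p k, ?_, swp_invol p k⟩
    rw [mem_rnkF] at hk ⊢
    rw [swap_getD u p hp, swap_getD u p hp] at hk
    obtain ⟨hk1, hk2⟩ := hk
    refine ⟨(swp_lt p u.length k hp).2 (hlen ▸ hk1), ?_⟩
    rcases hk2 with h | ⟨h1, h2⟩
    · exact Or.inl h
    · refine Or.inr ⟨h1, ?_⟩
      have hb1 : ¬(k = p ∧ i = p+1) := by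
        rintro ⟨rfl, rfl⟩
        apply hne
        have := h1.symm
        simpa [swp] using this
      have hb2 : ¬(k = p+1 ∧ i = p) := by
        rintro ⟨rfl, rfl⟩
        apply hne
        simpa [swp] using h1
      exact (swp_lt_swp p k i hb1 hb2).mpr h2
  · rintro ⟨a, ha, rfl⟩
    rw [mem_rnkF] at ha ⊢
    rw [swap_getD u p hp, swap_getD u p hp, swp_invol]
    obtain ⟨ha1, ha2⟩ := ha
    refine ⟨by rw [hlen]; exact (swp_lt p u.length a hp).2 ha1, ?_⟩
    rcases ha2 with h | ⟨h1, h2⟩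
    · exact Or.inl h
    · refine Or.inr ⟨h1, ?_⟩
      have hb1 : ¬(a = p ∧ swp p i = p+1) := by
        rintro ⟨h0, he⟩
        have hip : i = p := by
          unfold swp at he; split_ifs at he <;> omega
        rw [h0, hip] at h1
        exact hne (by simpa [swp] using h1)
      have hb2 : ¬(a = p+1 ∧ swp p i = p) := by
        rintro ⟨h0, he⟩
        have hip : i = p + 1 := by
          unfold swp at he; split_ifs at he <;> omega
        rw [h0, hip] at h1
        have := h1.symm
        exact hne (by simpa [swp] using this)
      have hiff := swp_lt_swp p a (swp p i) hb1 hb2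
      rw [swp_invol] at hiff
      exact hiff.mpr h2

lemma std_swap (u : List ℕ) (p : ℕ) (hp : p+1 < u.length)
    (hne : u.getD p 0 ≠ u.getD (p+1) 0) :
    std (u.take p ++ u.getD (p+1) 0 :: u.getD p 0 :: u.drop (p+2))
      = (std u).take p ++ (std u).getD (p+1) 0 :: (std u).getD p 0 :: (std u).drop (p+2) := by
  have hps : p + 1 < (std u).length := by rw [std_length]; exact hp
  have hlen := length_swapform u (u.getD (p+1) 0) (u.getD p 0) p hp
  apply ext_getD
  · rw [std_length, hlen, length_swapform _ _ _ _ hps, std_length]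
  · intro i hi'
    have hi : i < u.length := by rw [std_length, hlen] at hi'; exact hi'
    have hswpi : swp p i < u.length := (swp_lt p u.length i hp).2 hi
    rw [swap_getD (std u) p hps i, std_getD _ i (by rw [hlen]; exact hi),
      rnkF_swap u p hp hne i, Finset.card_image_of_injective _ (swp_inj p),
      std_getD u (swp p i) hswpi]

lemma filter_range_card (n : ℕ) (Q : ℕ → Prop) [DecidablePred Q] :
    ((List.range n).filter fun j => decide (Q j)).length = ((Finset.range n).filter Q).card := by
  rw [Finset.card, Finset.filter_val, Finset.range_val, Multiset.range, Multiset.filter_coe]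
  simp [List.countP_eq_length_filter]

lemma ext_getD' (L M : List ℕ) (h : L.length = M.length)
    (hg : ∀ i < L.length, L.getD i 0 = M.getD i 0) : L = M := by
  apply List.ext_getElem h
  intro i h1 h2
  rw [← List.getD_eq_getElem L 0 h1, ← List.getD_eq_getElem M 0 h2]
  exact hg i h1

lemma self_eq_map_getD (u : List ℕ) : u = (List.range u.length).map (fun i => u.getD i 0) := by
  apply ext_getD' _ _ (by simp)
  intro i hi
  have h2 : i < ((List.range u.length).map (fun i => u.getD i 0)).length := by simpa using hi
  rw [List.getD_eq_getElem _ 0 hi, List.getD_eq_getElem _ 0 h2, List.getElem_map,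
    List.getElem_range]
  exact (List.getD_eq_getElem u 0 hi).symm

lemma countP_eq_card_idx (w : List ℕ) (P : ℕ → Prop) [DecidablePred P] :
    w.countP (fun a => decide (P a))
      = ((Finset.range w.length).filter (fun j => P (w.getD j 0))).card := by
  conv_lhs => rw [self_eq_map_getD w, List.countP_map]
  rw [← filter_range_card]
  rw [List.countP_eq_length_filter]
  rfl

lemma sorted_getD {L : List ℕ} (hs : L.Pairwise (· ≤ ·)) {x m : ℕ}
    (h1 : L.countP (fun a => decide (a < x)) ≤ m)
    (h2 : m < L.countP (fun a => decide (a ≤ x))) :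
    L.getD m 0 = x := by
  induction L generalizing m with
  | nil => simp at h2
  | cons a t ih =>
    rw [List.pairwise_cons] at hs
    obtain ⟨ha, ht⟩ := hs
    rw [List.countP_cons] at h1 h2
    have b2 : (if decide (a ≤ x) = true then (1:ℕ) else 0) ≤ 1 := by split <;> omega
    by_cases hax : a < x
    · have e1 : (if decide (a < x) = true then (1:ℕ) else 0) = 1 := by simp [hax]
      have e2 : (if decide (a ≤ x) = true then (1:ℕ) else 0) = 1 := by simp [le_of_lt hax]
      rw [e1] at h1
      rw [e2] at h2
      cases m with
      | zero => omega
      | succ m =>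
        show t.getD m 0 = x
        apply ih ht (by omega) (by omega)
    · have hax' : x ≤ a := le_of_not_gt hax
      have e1 : (if decide (a < x) = true then (1:ℕ) else 0) = 0 := by simp [hax]
      rw [e1] at h1
      have htz : t.countP (fun b => decide (b < x)) = 0 := by
        rw [List.countP_eq_zero]
        intro b hb
        simpa using not_lt_of_ge (le_trans hax' (ha b hb))
      cases m with
      | zero =>
        show a = x
        by_contra hne
        have hxa : ¬ (a ≤ x) := by omega
        have e2 : (if decide (a ≤ x) = true then (1:ℕ) else 0) = 0 := by simp [hxa]
        rw [e2, Nat.add_zero] at h2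
        obtain ⟨b, hb, hbx⟩ := List.countP_pos_iff.mp h2
        exact hxa (le_trans (ha b hb) (by simpa using hbx))
      | succ m =>
        show t.getD m 0 = x
        apply ih ht (by omega) (by omega)

lemma rnk_bounds (w : List ℕ) (i : ℕ) (hi : i < w.length) :
    w.countP (fun a => decide (a < w.getD i 0)) ≤ (rnkF w i).card ∧
    (rnkF w i).card < w.countP (fun a => decide (a ≤ w.getD i 0)) := by
  rw [countP_eq_card_idx, countP_eq_card_idx]
  constructor
  · apply Finset.card_le_card
    intro j hj
    simp only [Finset.mem_filter, Finset.mem_range] at hj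
    rw [mem_rnkF]
    exact ⟨hj.1, Or.inl hj.2⟩
  · apply Finset.card_lt_card
    constructor
    · intro j hj
      rw [mem_rnkF] at hj
      simp only [Finset.mem_filter, Finset.mem_range]
      rcases hj.2 with h|⟨h,_⟩
      exacts [⟨hj.1, le_of_lt h⟩, ⟨hj.1, le_of_eq h⟩]
    · intro hsub
      have hmem : i ∈ rnkF w i := hsub (by
        simp only [Finset.mem_filter, Finset.mem_range]; exact ⟨hi, le_rfl⟩)
      rw [mem_rnkF] at hmem
      omega

lemma key_sort (w : List ℕ) (i : ℕ) (hiw : i < w.length) :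
    (List.insertionSort (· ≤ ·) w).getD ((rnkF w i).card) 0 = w.getD i 0 := by
  apply sorted_getD (List.pairwise_insertionSort _ w)
  · rw [(List.perm_insertionSort _ w).countP_eq]
    exact (rnk_bounds w i hiw).1
  · rw [(List.perm_insertionSort _ w).countP_eq]
    exact (rnk_bounds w i hiw).2

lemma destd (u v : List ℕ) (hs : std u = std v) (hc : ∀ a, u.count a = v.count a) : u = v := by
  have hperm : u.Perm v := (List.perm_iff_count).mpr hc
  have hlen : u.length = v.length := hperm.length_eq
  have hsort : List.insertionSort (· ≤ ·) u = List.insertionSort (· ≤ ·) v :=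
    (fun h a b => List.Perm.eq_of_pairwise' a b h)
      ((List.perm_insertionSort _ u).trans (hperm.trans (List.perm_insertionSort _ v).symm))
      (List.pairwise_insertionSort _ u) (List.pairwise_insertionSort _ v)
  apply ext_getD' _ _ hlen
  intro i hi
  have hi' : i < v.length := hlen ▸ hi
  have hcard : (rnkF u i).card = (rnkF v i).card := by
    have e1 := std_getD u i hi
    have e2 := std_getD v i hi'
    have e3 : (std u).getD i 0 = (std v).getD i 0 := by rw [hs]
    omega
  rw [← key_sort u i hi, ← key_sort v i hi', hsort, hcard]

lemma getD_at (P S : List ℕ) (x : ℕ) : (P ++ x :: S).getD P.length 0 = x := by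
  rw [List.getD_append_right _ _ _ _ le_rfl]
  simp

lemma getD_at1 (P S : List ℕ) (x y : ℕ) : (P ++ x :: y :: S).getD (P.length+1) 0 = y := by
  rw [List.getD_append_right _ _ _ _ (by omega)]
  have : P.length + 1 - P.length = 1 := by omega
  rw [this]
  simp

lemma take_at (P S : List ℕ) : (P ++ S).take P.length = P := List.take_left

lemma drop_at2 (P S : List ℕ) (x y : ℕ) : (P ++ x :: y :: S).drop (P.length+2) = S := by
  have h : P ++ x :: y :: S = (P ++ [x, y]) ++ S := by simp
  have h2 : P.length + 2 = (P ++ [x, y]).length := by simp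
  rw [h, h2, List.drop_left]

lemma self_swapform (L : List ℕ) (j : ℕ) (hj : j+1 < L.length) :
    L = L.take j ++ L.getD j 0 :: L.getD (j+1) 0 :: L.drop (j+2) := by
  conv_lhs => rw [← List.take_append_drop j L]
  rw [drop_eq_getD_cons L j (by omega), drop_eq_getD_cons L (j+1) hj]

lemma decomp3' (L : List ℕ) (i j k : ℕ) (x y : ℕ) (hij : i < j) (hjk : j + 2 ≤ k)
    (hk : k < L.length) :
    L.take j ++ x :: y :: L.drop (j+2)
      = L.take i ++ (L.getD i 0 :: (((L.drop (i+1)).take (j - (i+1))) ++ x :: y ::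
          (((L.drop (j+2)).take (k - (j+2))) ++ [L.getD k 0]))) ++ L.drop (k+1) := by
  have e1 := take_split L i j hij (by omega)
  have e2 := drop_split L (j+2) (k - (j+2))
  have e3 : j + 2 + (k - (j+2)) = k := by omega
  rw [e3] at e2
  rw [e1]
  conv_lhs => rw [e2, drop_eq_getD_cons L k hk]
  simp

lemma decomp3 (L : List ℕ) (i j k : ℕ) (hij : i < j) (hjk : j + 2 ≤ k) (hk : k < L.length) :
    L = L.take i ++ (L.getD i 0 :: (((L.drop (i+1)).take (j - (i+1))) ++ L.getD j 0 ::
          L.getD (j+1) 0 :: (((L.drop (j+2)).take (k - (j+2))) ++ [L.getD k 0]))) ++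
        L.drop (k+1) := by
  conv_lhs => rw [self_swapform L j (by omega)]
  exact decomp3' L i j k _ _ hij hjk hk

lemma pat_facts (p u0 v0 s : List ℕ) (z1 z2 z3 z4 : ℕ) :
    ((p ++ (z1 :: (u0 ++ z2 :: z3 :: (v0 ++ [z4]))) ++ s).getD p.length 0 = z1)
  ∧ ((p ++ (z1 :: (u0 ++ z2 :: z3 :: (v0 ++ [z4]))) ++ s).getD (p.length + 1 + u0.length) 0 = z2)
  ∧ ((p ++ (z1 :: (u0 ++ z2 :: z3 :: (v0 ++ [z4]))) ++ s).getD (p.length + 1 + u0.length + 1) 0 = z3)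
  ∧ ((p ++ (z1 :: (u0 ++ z2 :: z3 :: (v0 ++ [z4]))) ++ s).getD (p.length + 1 + u0.length + 2 + v0.length) 0 = z4)
  ∧ (p ++ (z1 :: (u0 ++ z2 :: z3 :: (v0 ++ [z4]))) ++ s).length
      = p.length + 1 + u0.length + 2 + v0.length + 1 + s.length
  ∧ (p ++ (z1 :: (u0 ++ z2 :: z3 :: (v0 ++ [z4]))) ++ s).take (p.length + 1 + u0.length)
      = p ++ z1 :: u0
  ∧ (p ++ (z1 :: (u0 ++ z2 :: z3 :: (v0 ++ [z4]))) ++ s).drop (p.length + 1 + u0.length + 2)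
      = v0 ++ z4 :: s := by
  have e2 : p ++ (z1 :: (u0 ++ z2 :: z3 :: (v0 ++ [z4]))) ++ s
      = (p ++ z1 :: u0) ++ z2 :: z3 :: ((v0 ++ [z4]) ++ s) := by simp
  have e4 : p ++ (z1 :: (u0 ++ z2 :: z3 :: (v0 ++ [z4]))) ++ s
      = (p ++ z1 :: (u0 ++ z2 :: z3 :: v0)) ++ z4 :: s := by simp
  have l2 : (p ++ z1 :: u0).length = p.length + 1 + u0.length := by simp; omega
  have l4 : (p ++ z1 :: (u0 ++ z2 :: z3 :: v0)).length
      = p.length + 1 + u0.length + 2 + v0.length := by simp; omega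
  refine ⟨?_, ?_, ?_, ?_, ?_, ?_, ?_⟩
  · have e1 : p ++ (z1 :: (u0 ++ z2 :: z3 :: (v0 ++ [z4]))) ++ s
        = p ++ z1 :: ((u0 ++ z2 :: z3 :: (v0 ++ [z4])) ++ s) := by simp
    rw [e1, getD_at]
  · rw [e2, ← l2, getD_at]
  · rw [e2, ← l2, getD_at1]
  · rw [e4, ← l4, getD_at]
  · simp; omega
  · rw [e2, ← l2, take_at]
  · rw [e2, ← l2, drop_at2]
    simp

lemma step_std {w w' : List ℕ} (h : BaxterStep w w') : BaxterStep (std w) (std w') := by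
  obtain ⟨p, s, m, m', hadj, hw, hw'⟩ := h
  rcases hadj with ⟨a,b,c,d,u0,v0,h1,h2,h3,hm,hm'⟩ | ⟨a,b,c,d,u0,v0,h1,h2,h3,hm,hm'⟩
  · subst hm hm' hw hw'
    obtain ⟨g1, g2, g3, g4, glen, gtake, gdrop⟩ := pat_facts p u0 v0 s c a d b
    set W := p ++ (c :: (u0 ++ a :: d :: (v0 ++ [b]))) ++ s with hWdef
    set W' := p ++ (c :: (u0 ++ d :: a :: (v0 ++ [b]))) ++ s with hW'def
    set i := p.length
    set j := p.length + 1 + u0.length with hjdef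
    set k := p.length + 1 + u0.length + 2 + v0.length with hkdef
    have hkW : k < W.length := by omega
    have hjW : j + 1 < W.length := by omega
    have hne : W.getD j 0 ≠ W.getD (j+1) 0 := by rw [g2, g3]; omega
    have hA : W' = W.take j ++ W.getD (j+1) 0 :: W.getD j 0 :: W.drop (j+2) := by
      rw [gtake, g2, g3, gdrop]
      simp [hW'def]
    set N := std W with hNdef
    have hNlen : N.length = W.length := std_length W
    have hkN : k < N.length := by omega
    have q1 : N.getD j 0 ≤ N.getD k 0 :=
      le_of_lt ((std_lt_iff W (by omega) hkW).mpr (by rw [g2, g4]; exact h1))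
    have q2 : N.getD k 0 < N.getD i 0 :=
      (std_gt_iff W (by omega) hkW).mpr (by rw [g1, g4]; exact h2)
    have q3 : N.getD i 0 ≤ N.getD (j+1) 0 :=
      le_of_lt ((std_lt_iff W (by omega) hjW).mpr (by rw [g1, g3]; exact h3))
    refine ⟨N.take i, N.drop (k+1),
      N.getD i 0 :: (((N.drop (i+1)).take (j - (i+1))) ++ N.getD j 0 :: N.getD (j+1) 0 ::
        (((N.drop (j+2)).take (k - (j+2))) ++ [N.getD k 0])),
      N.getD i 0 :: (((N.drop (i+1)).take (j - (i+1))) ++ N.getD (j+1) 0 :: N.getD j 0 ::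
        (((N.drop (j+2)).take (k - (j+2))) ++ [N.getD k 0])),
      Or.inl ⟨N.getD j 0, N.getD k 0, N.getD i 0, N.getD (j+1) 0,
        (N.drop (i+1)).take (j - (i+1)), (N.drop (j+2)).take (k - (j+2)),
        q1, q2, q3, rfl, rfl⟩,
      decomp3 N i j k (by omega) (by omega) hkN, ?_⟩
    rw [hA, std_swap W j hjW hne, ← hNdef]
    exact decomp3' N i j k _ _ (by omega) (by omega) hkN
  · subst hm hm' hw hw'
    obtain ⟨g1, g2, g3, g4, glen, gtake, gdrop⟩ := pat_facts p u0 v0 s b d a c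
    set W := p ++ (b :: (u0 ++ d :: a :: (v0 ++ [c]))) ++ s with hWdef
    set W' := p ++ (b :: (u0 ++ a :: d :: (v0 ++ [c]))) ++ s with hW'def
    set i := p.length
    set j := p.length + 1 + u0.length with hjdef
    set k := p.length + 1 + u0.length + 2 + v0.length with hkdef
    have hkW : k < W.length := by omega
    have hjW : j + 1 < W.length := by omega
    have hne : W.getD j 0 ≠ W.getD (j+1) 0 := by rw [g2, g3]; omega
    have hA : W' = W.take j ++ W.getD (j+1) 0 :: W.getD j 0 :: W.drop (j+2) := by
      rw [gtake, g2, g3, gdrop]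
      simp [hW'def]
    set N := std W with hNdef
    have hNlen : N.length = W.length := std_length W
    have hkN : k < N.length := by omega
    have q1 : N.getD (j+1) 0 < N.getD i 0 :=
      (std_gt_iff W (by omega) hjW).mpr (by rw [g1, g3]; exact h1)
    have q2 : N.getD i 0 ≤ N.getD k 0 :=
      le_of_lt ((std_lt_iff W (by omega) hkW).mpr (by rw [g1, g4]; exact h2))
    have q3 : N.getD k 0 < N.getD j 0 :=
      (std_gt_iff W (by omega) hkW).mpr (by rw [g2, g4]; exact h3)
    refine ⟨N.take i, N.drop (k+1),
      N.getD i 0 :: (((N.drop (i+1)).take (j - (i+1))) ++ N.getD j 0 :: N.getD (j+1) 0 ::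
        (((N.drop (j+2)).take (k - (j+2))) ++ [N.getD k 0])),
      N.getD i 0 :: (((N.drop (i+1)).take (j - (i+1))) ++ N.getD (j+1) 0 :: N.getD j 0 ::
        (((N.drop (j+2)).take (k - (j+2))) ++ [N.getD k 0])),
      Or.inr ⟨N.getD (j+1) 0, N.getD i 0, N.getD k 0, N.getD j 0,
        (N.drop (i+1)).take (j - (i+1)), (N.drop (j+2)).take (k - (j+2)),
        q1, q2, q3, rfl, rfl⟩,
      decomp3 N i j k (by omega) (by omega) hkN, ?_⟩
    rw [hA, std_swap W j hjW hne, ← hNdef]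
    exact decomp3' N i j k _ _ (by omega) (by omega) hkN

lemma step_lift {σ τ : List ℕ} (u : List ℕ) (h : BaxterStep σ τ) (hu : std u = σ) :
    ∃ u', BaxterStep u u' ∧ std u' = τ := by
  obtain ⟨p, s, m, m', hadj, hw, hw'⟩ := h
  rcases hadj with ⟨a,b,c,d,u0,v0,h1,h2,h3,hm,hm'⟩ | ⟨a,b,c,d,u0,v0,h1,h2,h3,hm,hm'⟩
  all_goals subst hm hm' hw hw'
  · -- σ = p ++ (c :: (u0 ++ a :: d :: (v0 ++ [b]))) ++ s
    obtain ⟨g1, g2, g3, g4, glen, gtake, gdrop⟩ := pat_facts p u0 v0 s c a d b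
    set i := p.length
    set j := p.length + 1 + u0.length with hjdef
    set k := p.length + 1 + u0.length + 2 + v0.length with hkdef
    have hlen : u.length = (p ++ (c :: (u0 ++ a :: d :: (v0 ++ [b]))) ++ s).length := by
      rw [← hu, std_length]
    have hkU : k < u.length := by omega
    have hjU : j + 1 < u.length := by omega
    have gs1 : (std u).getD i 0 = c := by rw [hu]; exact g1
    have gs2 : (std u).getD j 0 = a := by rw [hu]; exact g2
    have gs3 : (std u).getD (j+1) 0 = d := by rw [hu]; exact g3
    have gs4 : (std u).getD k 0 = b := by rw [hu]; exact g4
    have x1 : u.getD j 0 ≤ u.getD k 0 := by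
      have := (std_gt_iff u (show j < k by omega) hkU).not
      rw [gs2, gs4] at this
      exact le_of_not_gt (this.mp (by omega))
    have x2 : u.getD k 0 < u.getD i 0 := by
      have := (std_gt_iff u (show i < k by omega) hkU).mp
      rw [gs1, gs4] at this
      exact this h2
    have x3 : u.getD i 0 ≤ u.getD (j+1) 0 := by
      have := (std_gt_iff u (show i < j+1 by omega) hjU).not
      rw [gs1, gs3] at this
      exact le_of_not_gt (this.mp (by omega))
    have hneu : u.getD j 0 ≠ u.getD (j+1) 0 := by omega
    refine ⟨u.take j ++ u.getD (j+1) 0 :: u.getD j 0 :: u.drop (j+2), ?_, ?_⟩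
    · refine ⟨u.take i, u.drop (k+1),
        u.getD i 0 :: (((u.drop (i+1)).take (j - (i+1))) ++ u.getD j 0 :: u.getD (j+1) 0 ::
          (((u.drop (j+2)).take (k - (j+2))) ++ [u.getD k 0])),
        u.getD i 0 :: (((u.drop (i+1)).take (j - (i+1))) ++ u.getD (j+1) 0 :: u.getD j 0 ::
          (((u.drop (j+2)).take (k - (j+2))) ++ [u.getD k 0])),
        Or.inl ⟨u.getD j 0, u.getD k 0, u.getD i 0, u.getD (j+1) 0,
          (u.drop (i+1)).take (j - (i+1)), (u.drop (j+2)).take (k - (j+2)),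
          x1, x2, x3, rfl, rfl⟩,
        decomp3 u i j k (by omega) (by omega) hkU,
        decomp3' u i j k _ _ (by omega) (by omega) hkU⟩
    · rw [std_swap u j hjU hneu, hu, gtake, g2, g3, gdrop]
      simp
  · -- σ = p ++ (b :: (u0 ++ d :: a :: (v0 ++ [c]))) ++ s
    obtain ⟨g1, g2, g3, g4, glen, gtake, gdrop⟩ := pat_facts p u0 v0 s b d a c
    set i := p.length
    set j := p.length + 1 + u0.length with hjdef
    set k := p.length + 1 + u0.length + 2 + v0.length with hkdef
    have hlen : u.length = (p ++ (b :: (u0 ++ d :: a :: (v0 ++ [c]))) ++ s).length := by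
      rw [← hu, std_length]
    have hkU : k < u.length := by omega
    have hjU : j + 1 < u.length := by omega
    have gs1 : (std u).getD i 0 = b := by rw [hu]; exact g1
    have gs2 : (std u).getD j 0 = d := by rw [hu]; exact g2
    have gs3 : (std u).getD (j+1) 0 = a := by rw [hu]; exact g3
    have gs4 : (std u).getD k 0 = c := by rw [hu]; exact g4
    have x1 : u.getD (j+1) 0 < u.getD i 0 := by
      have := (std_gt_iff u (show i < j+1 by omega) hjU).mp
      rw [gs1, gs3] at this
      exact this h1
    have x2 : u.getD i 0 ≤ u.getD k 0 := by
      have := (std_gt_iff u (show i < k by omega) hkU).not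
      rw [gs1, gs4] at this
      exact le_of_not_gt (this.mp (by omega))
    have x3 : u.getD k 0 < u.getD j 0 := by
      have := (std_gt_iff u (show j < k by omega) hkU).mp
      rw [gs2, gs4] at this
      exact this h3
    have hneu : u.getD j 0 ≠ u.getD (j+1) 0 := by omega
    refine ⟨u.take j ++ u.getD (j+1) 0 :: u.getD j 0 :: u.drop (j+2), ?_, ?_⟩
    · refine ⟨u.take i, u.drop (k+1),
        u.getD i 0 :: (((u.drop (i+1)).take (j - (i+1))) ++ u.getD j 0 :: u.getD (j+1) 0 ::
          (((u.drop (j+2)).take (k - (j+2))) ++ [u.getD k 0])),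
        u.getD i 0 :: (((u.drop (i+1)).take (j - (i+1))) ++ u.getD (j+1) 0 :: u.getD j 0 ::
          (((u.drop (j+2)).take (k - (j+2))) ++ [u.getD k 0])),
        Or.inr ⟨u.getD (j+1) 0, u.getD i 0, u.getD k 0, u.getD j 0,
          (u.drop (i+1)).take (j - (i+1)), (u.drop (j+2)).take (k - (j+2)),
          x1, x2, x3, rfl, rfl⟩,
        decomp3 u i j k (by omega) (by omega) hkU,
        decomp3' u i j k _ _ (by omega) (by omega) hkU⟩
    · rw [std_swap u j hjU hneu, hu, gtake, g2, g3, gdrop]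
      simp

lemma step_lift' {σ τ : List ℕ} (u : List ℕ) (h : BaxterStep σ τ) (hu : std u = τ) :
    ∃ u', BaxterStep u' u ∧ std u' = σ := by
  obtain ⟨p, s, m, m', hadj, hw, hw'⟩ := h
  rcases hadj with ⟨a,b,c,d,u0,v0,h1,h2,h3,hm,hm'⟩ | ⟨a,b,c,d,u0,v0,h1,h2,h3,hm,hm'⟩
  all_goals subst hm hm' hw hw'
  · -- τ = p ++ (c :: (u0 ++ d :: a :: (v0 ++ [b]))) ++ s
    obtain ⟨g1, g2, g3, g4, glen, gtake, gdrop⟩ := pat_facts p u0 v0 s c d a b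
    set i := p.length
    set j := p.length + 1 + u0.length with hjdef
    set k := p.length + 1 + u0.length + 2 + v0.length with hkdef
    have hlen : u.length = (p ++ (c :: (u0 ++ d :: a :: (v0 ++ [b]))) ++ s).length := by
      rw [← hu, std_length]
    have hkU : k < u.length := by omega
    have hjU : j + 1 < u.length := by omega
    have gs1 : (std u).getD i 0 = c := by rw [hu]; exact g1
    have gs2 : (std u).getD j 0 = d := by rw [hu]; exact g2
    have gs3 : (std u).getD (j+1) 0 = a := by rw [hu]; exact g3
    have gs4 : (std u).getD k 0 = b := by rw [hu]; exact g4
    have x1 : u.getD (j+1) 0 ≤ u.getD k 0 := by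
      have := (std_gt_iff u (show j+1 < k by omega) hkU).not
      rw [gs3, gs4] at this
      exact le_of_not_gt (this.mp (by omega))
    have x2 : u.getD k 0 < u.getD i 0 := by
      have := (std_gt_iff u (show i < k by omega) hkU).mp
      rw [gs1, gs4] at this
      exact this h2
    have x3 : u.getD i 0 ≤ u.getD j 0 := by
      have := (std_gt_iff u (show i < j by omega) (by omega)).not
      rw [gs1, gs2] at this
      exact le_of_not_gt (this.mp (by omega))
    have hneu : u.getD j 0 ≠ u.getD (j+1) 0 := by omega
    refine ⟨u.take j ++ u.getD (j+1) 0 :: u.getD j 0 :: u.drop (j+2), ?_, ?_⟩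
    · refine ⟨u.take i, u.drop (k+1),
        u.getD i 0 :: (((u.drop (i+1)).take (j - (i+1))) ++ u.getD (j+1) 0 :: u.getD j 0 ::
          (((u.drop (j+2)).take (k - (j+2))) ++ [u.getD k 0])),
        u.getD i 0 :: (((u.drop (i+1)).take (j - (i+1))) ++ u.getD j 0 :: u.getD (j+1) 0 ::
          (((u.drop (j+2)).take (k - (j+2))) ++ [u.getD k 0])),
        Or.inl ⟨u.getD (j+1) 0, u.getD k 0, u.getD i 0, u.getD j 0,
          (u.drop (i+1)).take (j - (i+1)), (u.drop (j+2)).take (k - (j+2)),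
          x1, x2, x3, rfl, rfl⟩,
        decomp3' u i j k _ _ (by omega) (by omega) hkU,
        decomp3 u i j k (by omega) (by omega) hkU⟩
    · rw [std_swap u j hjU hneu, hu, gtake, g2, g3, gdrop]
      simp
  · -- τ = p ++ (b :: (u0 ++ a :: d :: (v0 ++ [c]))) ++ s
    obtain ⟨g1, g2, g3, g4, glen, gtake, gdrop⟩ := pat_facts p u0 v0 s b a d c
    set i := p.length
    set j := p.length + 1 + u0.length with hjdef
    set k := p.length + 1 + u0.length + 2 + v0.length with hkdef
    have hlen : u.length = (p ++ (b :: (u0 ++ a :: d :: (v0 ++ [c]))) ++ s).length := by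
      rw [← hu, std_length]
    have hkU : k < u.length := by omega
    have hjU : j + 1 < u.length := by omega
    have gs1 : (std u).getD i 0 = b := by rw [hu]; exact g1
    have gs2 : (std u).getD j 0 = a := by rw [hu]; exact g2
    have gs3 : (std u).getD (j+1) 0 = d := by rw [hu]; exact g3
    have gs4 : (std u).getD k 0 = c := by rw [hu]; exact g4
    have x1 : u.getD j 0 < u.getD i 0 := by
      have := (std_gt_iff u (show i < j by omega) (by omega)).mp
      rw [gs1, gs2] at this
      exact this h1
    have x2 : u.getD i 0 ≤ u.getD k 0 := by
      have := (std_gt_iff u (show i < k by omega) hkU).not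
      rw [gs1, gs4] at this
      exact le_of_not_gt (this.mp (by omega))
    have x3 : u.getD k 0 < u.getD (j+1) 0 := by
      have := (std_gt_iff u (show j+1 < k by omega) hkU).mp
      rw [gs3, gs4] at this
      exact this h3
    have hneu : u.getD j 0 ≠ u.getD (j+1) 0 := by omega
    refine ⟨u.take j ++ u.getD (j+1) 0 :: u.getD j 0 :: u.drop (j+2), ?_, ?_⟩
    · refine ⟨u.take i, u.drop (k+1),
        u.getD i 0 :: (((u.drop (i+1)).take (j - (i+1))) ++ u.getD (j+1) 0 :: u.getD j 0 ::
          (((u.drop (j+2)).take (k - (j+2))) ++ [u.getD k 0])),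
        u.getD i 0 :: (((u.drop (i+1)).take (j - (i+1))) ++ u.getD j 0 :: u.getD (j+1) 0 ::
          (((u.drop (j+2)).take (k - (j+2))) ++ [u.getD k 0])),
        Or.inr ⟨u.getD j 0, u.getD i 0, u.getD k 0, u.getD (j+1) 0,
          (u.drop (i+1)).take (j - (i+1)), (u.drop (j+2)).take (k - (j+2)),
          x1, x2, x3, rfl, rfl⟩,
        decomp3' u i j k _ _ (by omega) (by omega) hkU,
        decomp3 u i j k (by omega) (by omega) hkU⟩
    · rw [std_swap u j hjU hneu, hu, gtake, g2, g3, gdrop]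
      simp

lemma perm_step {w w' : List ℕ} (h : BaxterStep w w') : w.Perm w' := by
  obtain ⟨p, s, m, m', hadj, hw, hw'⟩ := h
  subst hw hw'
  refine List.Perm.append_right s (List.Perm.append_left p ?_)
  rcases hadj with ⟨a,b,c,d,u0,v0,h1,h2,h3,hm,hm'⟩ | ⟨a,b,c,d,u0,v0,h1,h2,h3,hm,hm'⟩ <;>
    subst hm hm'
  · exact List.Perm.cons c (List.Perm.append_left u0 (List.Perm.swap d a _))
  · exact List.Perm.cons b (List.Perm.append_left u0 (List.Perm.swap a d _))

lemma equiv_perm {u v : List ℕ} (h : BaxterEquiv u v) : u.Perm v := by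
  induction h with
  | rel x y hxy => exact perm_step hxy
  | refl x => exact List.Perm.refl x
  | symm x y h ih => exact ih.symm
  | trans x y z h1 h2 ih1 ih2 => exact ih1.trans ih2

lemma equiv_std {u v : List ℕ} (h : BaxterEquiv u v) : BaxterEquiv (std u) (std v) := by
  induction h with
  | rel x y hxy => exact Relation.EqvGen.rel _ _ (step_std hxy)
  | refl x => exact Relation.EqvGen.refl _
  | symm x y h ih => exact Relation.EqvGen.symm _ _ ih
  | trans x y z h1 h2 ih1 ih2 => exact Relation.EqvGen.trans _ _ _ ih1 ih2

lemma lift_equiv {σ τ : List ℕ} (h : Relation.EqvGen BaxterStep σ τ) :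
    (∀ u, std u = σ → ∃ u', Relation.EqvGen BaxterStep u u' ∧ std u' = τ) ∧
    (∀ u, std u = τ → ∃ u', Relation.EqvGen BaxterStep u u' ∧ std u' = σ) := by
  induction h with
  | rel x y hxy =>
    refine ⟨fun u hu => ?_, fun u hu => ?_⟩
    · obtain ⟨u', hs, hstd⟩ := step_lift u hxy hu
      exact ⟨u', Relation.EqvGen.rel _ _ hs, hstd⟩
    · obtain ⟨u', hs, hstd⟩ := step_lift' u hxy hu
      exact ⟨u', Relation.EqvGen.symm _ _ (Relation.EqvGen.rel _ _ hs), hstd⟩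
  | refl x =>
    exact ⟨fun u hu => ⟨u, Relation.EqvGen.refl u, hu⟩,
      fun u hu => ⟨u, Relation.EqvGen.refl u, hu⟩⟩
  | symm x y h ih => exact ⟨ih.2, ih.1⟩
  | trans x y z h1 h2 ih1 ih2 =>
    refine ⟨fun u hu => ?_, fun u hu => ?_⟩
    · obtain ⟨u1, e1, s1⟩ := ih1.1 u hu
      obtain ⟨u2, e2, s2⟩ := ih2.1 u1 s1
      exact ⟨u2, Relation.EqvGen.trans _ _ _ e1 e2, s2⟩
    · obtain ⟨u1, e1, s1⟩ := ih2.2 u hu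
      obtain ⟨u2, e2, s2⟩ := ih1.2 u1 s1
      exact ⟨u2, Relation.EqvGen.trans _ _ _ e1 e2, s2⟩


/-- the Baxter equivalence is compatible with the
destandardization process. -/
theorem baxter_compatible_with_destandardization (u v : List ℕ) :
    BaxterEquiv u v ↔ (BaxterEquiv (std u) (std v) ∧ ∀ a, u.count a = v.count a) := by
  constructor
  · intro h
    exact ⟨equiv_std h, fun a => (equiv_perm h).count_eq a⟩
  · rintro ⟨hstd, hcnt⟩
    obtain ⟨u', he, hs⟩ := (lift_equiv hstd).1 u rfl
    have hc' : ∀ a, u'.count a = v.count a := by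
      intro a
      rw [← (equiv_perm he).count_eq a]
      exact hcnt a
    have hv : u' = v := destd u' v hs hc'
    exact hv ▸ he
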